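/- There exists a Hardy-type quantum behavior P(ab|xy) on binary inputs/outputs, realizable by projective measurements on a two-qubit pure state, satisfying P(00|00) = 1/12, P(01|01) = P(10|10) = P(00|11) = 0, such that for any ℓ > 0, any h, and uniform observed inputs P(xy) = 1/4, the full distribution P(abxy) = P(xy)P(ab|xy) violates the MDL inequality ℓP(0000) − h(P(0101)+P(1010)+P(0011)) ≤ 0, yielding the value ℓ/48 > 0. -/
import Mathlib

noncomputable section MDLaux

private def s5 : ℝ := Real.sqrt 5
private def s3 : ℝ := Real.sqrt 3
private def rA : ℝ := Real.sqrt ((5 + 2*s5)/10)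
private def rB : ℝ := Real.sqrt ((5 - 2*s5)/10)
private def rC : ℝ := Real.sqrt ((5 + s5)/10)
private def rD : ℝ := Real.sqrt ((5 - s5)/10)

private lemma hs5nn : (0:ℝ) ≤ s5 := Real.sqrt_nonneg 5
private lemma hs5 : s5^2 = 5 := Real.sq_sqrt (by norm_num)
private lemma hs5le : s5 ≤ 5/2 := by nlinarith [hs5, hs5nn]
private lemma hs5ge : 1 ≤ s5 := by nlinarith [hs5, hs5nn]
private lemma hs3 : s3^2 = 3 := Real.sq_sqrt (by norm_num)
private lemma hs3pos : 0 < s3 := Real.sqrt_pos.mpr (by norm_num)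

private lemma hA2 : rA^2 = (5 + 2*s5)/10 := Real.sq_sqrt (by nlinarith [hs5nn])
private lemma hB2 : rB^2 = (5 - 2*s5)/10 := Real.sq_sqrt (by nlinarith [hs5le])
private lemma hC2 : rC^2 = (5 + s5)/10 := Real.sq_sqrt (by nlinarith [hs5nn])
private lemma hD2 : rD^2 = (5 - s5)/10 := Real.sq_sqrt (by nlinarith [hs5le])

private lemma sqeq {a b : ℝ} (ha : 0 ≤ a) (hb : 0 ≤ b) (h : a^2 = b^2) : a = b := by
  calc a = Real.sqrt (a^2) := (Real.sqrt_sq ha).symm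
  _ = Real.sqrt (b^2) := by rw [h]
  _ = b := Real.sqrt_sq hb

private lemma hK : rA * rD * (s5 - 1) = rB * rC * (s5 + 1) := by
  apply sqeq
  · have := hs5ge
    have h := mul_nonneg (mul_nonneg (Real.sqrt_nonneg ((5 + 2*s5)/10))
      (Real.sqrt_nonneg ((5 - s5)/10))) (by linarith : (0:ℝ) ≤ s5 - 1)
    unfold rA rD
    linarith
  · have := hs5ge
    have h := mul_nonneg (mul_nonneg (Real.sqrt_nonneg ((5 - 2*s5)/10))
      (Real.sqrt_nonneg ((5 + s5)/10))) (by linarith : (0:ℝ) ≤ s5 + 1)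
    unfold rB rC
    linarith
  · have h1 : (rA*rD)^2 = (5 + 2*s5)*(5 - s5)/100 := by
      rw [mul_pow, hA2, hD2]; ring
    have h2 : (rB*rC)^2 = (5 - 2*s5)*(5 + s5)/100 := by
      rw [mul_pow, hB2, hC2]; ring
    nlinarith [h1, h2, hs5]

private def Emat : Fin 2 → Fin 2 → Fin 2 → ℝ :=
  ![![![rA, rB], ![-rB, rA]], ![![rC, -rD], ![rD, rC]]]
private def Fmat : Fin 2 → Fin 2 → Fin 2 → ℝ :=
  ![![![rA, -rB], ![rB, rA]], ![![rC, rD], ![-rD, rC]]]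
private def Psi : Fin 2 × Fin 2 → ℝ :=
  fun p => ![![(s5-1)/(2*s3), 0], ![0, (s5+1)/(2*s3)]] p.1 p.2

end MDLaux

/-- existence of a Hardy-type quantum behavior, realized by projective
measurements (orthonormal bases) on a two-qubit pure state, violating the MDL
inequality for every `ℓ > 0` with value `ℓ/48`. -/
theorem stmt_9 :
    ∃ (ψ : Fin 2 × Fin 2 → ℂ)
      (e f : Fin 2 → Fin 2 → Fin 2 → ℂ)
      (P : Fin 2 → Fin 2 → Fin 2 → Fin 2 → ℝ),
      -- ψ is a unit vector in ℂ² ⊗ ℂ²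
      (∑ p : Fin 2 × Fin 2, Complex.normSq (ψ p) = 1) ∧
      -- for each input x, (e x a)_a is an orthonormal basis of ℂ² (projective measurement)
      (∀ x a a', (∑ i : Fin 2, star (e x a i) * e x a' i) =
        if a = a' then 1 else 0) ∧
      (∀ y b b', (∑ i : Fin 2, star (f y b i) * f y b' i) =
        if b = b' then 1 else 0) ∧
      -- Born rule: P(ab|xy) = |⟨(e x a) ⊗ (f y b), ψ⟩|²
      (∀ a b x y, P a b x y =
        Complex.normSq (∑ p : Fin 2 × Fin 2, star (e x a p.1 * f y b p.2) * ψ p)) ∧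
      -- Hardy-type constraints
      P 0 0 0 0 = 1 / 12 ∧ P 0 1 0 1 = 0 ∧ P 1 0 1 0 = 0 ∧ P 0 0 1 1 = 0 ∧
      -- with uniform inputs P(xy) = 1/4, the MDL inequality is violated for every ℓ > 0
      (∀ ℓ h : ℝ, 0 < ℓ →
        ℓ * (1 / 4 * P 0 0 0 0) -
          h * (1 / 4 * P 0 1 0 1 + 1 / 4 * P 1 0 1 0 + 1 / 4 * P 0 0 1 1) = ℓ / 48 ∧
        0 < ℓ / 48) := by
  have hs3ne : s3 ≠ 0 := hs3pos.ne'
  refine ⟨fun p => (Psi p : ℂ), fun x a i => (Emat x a i : ℂ), fun y b i => (Fmat y b i : ℂ),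
    fun a b x y => Complex.normSq (∑ p : Fin 2 × Fin 2,
      star ((Emat x a p.1 : ℂ) * (Fmat y b p.2 : ℂ)) * (Psi p : ℂ)),
    ?_, ?_, ?_, fun a b x y => rfl, ?_, ?_, ?_, ?_, ?_⟩
  · -- normalization
    simp only [Fintype.sum_prod_type, Fin.sum_univ_two, Psi, Matrix.cons_val_zero,
      Matrix.cons_val_one, Matrix.head_cons, Complex.normSq_ofReal]
    field_simp
    linear_combination 2 * hs5 - 4 * hs3
  · -- orthonormality of e
    intro x a a'
    fin_cases x <;> fin_cases a <;> fin_cases a' <;>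
      simp [Fin.sum_univ_two, Emat, Complex.star_def, Complex.conj_ofReal,
        ← Complex.ofReal_mul, ← Complex.ofReal_add] <;>
      norm_cast <;>
      first
        | linear_combination hA2 + hB2
        | linear_combination hC2 + hD2
        | ring
  · -- orthonormality of f
    intro y b b'
    fin_cases y <;> fin_cases b <;> fin_cases b' <;>
      simp [Fin.sum_univ_two, Fmat, Complex.star_def, Complex.conj_ofReal,
        ← Complex.ofReal_mul, ← Complex.ofReal_add] <;>
      norm_cast <;>
      first
        | linear_combination hA2 + hB2
        | linear_combination hC2 + hD2
        | ring
  · -- P 0 0 0 0 = 1/12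
    simp only [Fintype.sum_prod_type, Fin.sum_univ_two, Psi, Emat, Fmat,
      Matrix.cons_val_zero, Matrix.cons_val_one, Matrix.head_cons,
      Complex.star_def, ← Complex.ofReal_mul, Complex.conj_ofReal,
      ← Complex.ofReal_add, Complex.normSq_ofReal]
    have amp : rA * rA * ((s5 - 1) / (2 * s3)) + rA * -rB * 0 +
        (rB * rA * 0 + rB * -rB * ((s5 + 1) / (2 * s3))) = 1/(2*s3) := by
      linear_combination ((s5-1)/(2*s3)) * hA2 - ((s5+1)/(2*s3)) * hB2 + (1/(5*s3)) * hs5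
    rw [amp]
    rw [div_mul_div_comm, one_mul, show 2*s3*(2*s3) = 4*s3^2 by ring, hs3]
    norm_num
  · -- P 0 1 0 1 = 0
    simp only [Fintype.sum_prod_type, Fin.sum_univ_two, Psi, Emat, Fmat,
      Matrix.cons_val_zero, Matrix.cons_val_one, Matrix.head_cons,
      Complex.star_def, ← Complex.ofReal_mul, Complex.conj_ofReal,
      ← Complex.ofReal_add, Complex.normSq_ofReal]
    have amp : rA * -rD * ((s5 - 1) / (2 * s3)) + rA * rC * 0 +
        (rB * -rD * 0 + rB * rC * ((s5 + 1) / (2 * s3))) = 0 := by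
      linear_combination (-(1/(2*s3))) * hK
    rw [amp, mul_zero]
  · -- P 1 0 1 0 = 0
    simp only [Fintype.sum_prod_type, Fin.sum_univ_two, Psi, Emat, Fmat,
      Matrix.cons_val_zero, Matrix.cons_val_one, Matrix.head_cons,
      Complex.star_def, ← Complex.ofReal_mul, Complex.conj_ofReal,
      ← Complex.ofReal_add, Complex.normSq_ofReal]
    have amp : rD * rA * ((s5 - 1) / (2 * s3)) + rD * -rB * 0 +
        (rC * rA * 0 + rC * -rB * ((s5 + 1) / (2 * s3))) = 0 := by
      linear_combination (1/(2*s3)) * hK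
    rw [amp, mul_zero]
  · -- P 0 0 1 1 = 0
    simp only [Fintype.sum_prod_type, Fin.sum_univ_two, Psi, Emat, Fmat,
      Matrix.cons_val_zero, Matrix.cons_val_one, Matrix.head_cons,
      Complex.star_def, ← Complex.ofReal_mul, Complex.conj_ofReal,
      ← Complex.ofReal_add, Complex.normSq_ofReal]
    have amp : rC * rC * ((s5 - 1) / (2 * s3)) + rC * rD * 0 +
        (-rD * rC * 0 + -rD * rD * ((s5 + 1) / (2 * s3))) = 0 := by
      linear_combination ((s5-1)/(2*s3)) * hC2 - ((s5+1)/(2*s3)) * hD2 + (1/(10*s3)) * hs5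
    rw [amp, mul_zero]
  · -- MDL violation
    intro ℓ h hℓ
    refine ⟨?_, by linarith⟩
    have h0000 : Complex.normSq (∑ p : Fin 2 × Fin 2,
        star ((Emat 0 0 p.1 : ℂ) * (Fmat 0 0 p.2 : ℂ)) * (Psi p : ℂ)) = 1/12 := by
      simp only [Fintype.sum_prod_type, Fin.sum_univ_two, Psi, Emat, Fmat,
        Matrix.cons_val_zero, Matrix.cons_val_one, Matrix.head_cons,
        Complex.star_def, ← Complex.ofReal_mul, Complex.conj_ofReal,
        ← Complex.ofReal_add, Complex.normSq_ofReal]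
      have amp : rA * rA * ((s5 - 1) / (2 * s3)) + rA * -rB * 0 +
          (rB * rA * 0 + rB * -rB * ((s5 + 1) / (2 * s3))) = 1/(2*s3) := by
        linear_combination ((s5-1)/(2*s3)) * hA2 - ((s5+1)/(2*s3)) * hB2 + (1/(5*s3)) * hs5
      rw [amp]
      rw [div_mul_div_comm, one_mul, show 2*s3*(2*s3) = 4*s3^2 by ring, hs3]
      norm_num
    have h0101 : Complex.normSq (∑ p : Fin 2 × Fin 2,
        star ((Emat 0 0 p.1 : ℂ) * (Fmat 1 1 p.2 : ℂ)) * (Psi p : ℂ)) = 0 := by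
      simp only [Fintype.sum_prod_type, Fin.sum_univ_two, Psi, Emat, Fmat,
        Matrix.cons_val_zero, Matrix.cons_val_one, Matrix.head_cons,
        Complex.star_def, ← Complex.ofReal_mul, Complex.conj_ofReal,
        ← Complex.ofReal_add, Complex.normSq_ofReal]
      have amp : rA * -rD * ((s5 - 1) / (2 * s3)) + rA * rC * 0 +
          (rB * -rD * 0 + rB * rC * ((s5 + 1) / (2 * s3))) = 0 := by
        linear_combination (-(1/(2*s3))) * hK
      rw [amp, mul_zero]
    have h1010 : Complex.normSq (∑ p : Fin 2 × Fin 2,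
        star ((Emat 1 1 p.1 : ℂ) * (Fmat 0 0 p.2 : ℂ)) * (Psi p : ℂ)) = 0 := by
      simp only [Fintype.sum_prod_type, Fin.sum_univ_two, Psi, Emat, Fmat,
        Matrix.cons_val_zero, Matrix.cons_val_one, Matrix.head_cons,
        Complex.star_def, ← Complex.ofReal_mul, Complex.conj_ofReal,
        ← Complex.ofReal_add, Complex.normSq_ofReal]
      have amp : rD * rA * ((s5 - 1) / (2 * s3)) + rD * -rB * 0 +
          (rC * rA * 0 + rC * -rB * ((s5 + 1) / (2 * s3))) = 0 := by
        linear_combination (1/(2*s3)) * hK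
      rw [amp, mul_zero]
    have h0011 : Complex.normSq (∑ p : Fin 2 × Fin 2,
        star ((Emat 1 0 p.1 : ℂ) * (Fmat 1 0 p.2 : ℂ)) * (Psi p : ℂ)) = 0 := by
      simp only [Fintype.sum_prod_type, Fin.sum_univ_two, Psi, Emat, Fmat,
        Matrix.cons_val_zero, Matrix.cons_val_one, Matrix.head_cons,
        Complex.star_def, ← Complex.ofReal_mul, Complex.conj_ofReal,
        ← Complex.ofReal_add, Complex.normSq_ofReal]
      have amp : rC * rC * ((s5 - 1) / (2 * s3)) + rC * rD * 0 +
          (-rD * rC * 0 + -rD * rD * ((s5 + 1) / (2 * s3))) = 0 := by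
        linear_combination ((s5-1)/(2*s3)) * hC2 - ((s5+1)/(2*s3)) * hD2 + (1/(10*s3)) * hs5
      rw [amp, mul_zero]
    beta_reduce
    rw [h0000, h0101, h1010, h0011]
    ring
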